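/- arXiv:1502.04895 — 5 statements merged into one kernel-verified Lean document; each statement's English description precedes it below -/
import Mathlib

section
/- Let I₁ > 0 and F = I₃²λ² − 4mglI₁ with mgl > 0. If F < 0, then for every real E at least one root of t⁴ + ((E²+F)/(2I₁²)) t² + (E²−F)²/(16I₁⁴) has non-zero real part. -/
theorem unstable_regime_root_with_real_part (I1 I3 lam m g l F : ℝ)
    (hI1 : 0 < I1) (hmgl : 0 < m*g*l)
    (hF : F = I3^2*lam^2 - 4*m*g*l*I1) (hFneg : F < 0) (E : ℝ) :
    ∃ z : ℂ,
      z^4 + ((((E^2 + F)/(2*I1^2) : ℝ)) : ℂ) * z^2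
        + ((((E^2 - F)^2/(16*I1^4) : ℝ)) : ℂ) = 0 ∧ z.re ≠ 0 := by
  have hI1' : I1 ≠ 0 := ne_of_gt hI1
  have hFpos : 0 < -F := by linarith
  have hsqrt : Real.sqrt (-F) ^ 2 = -F := Real.sq_sqrt hFpos.le
  have hsqrtpos : 0 < Real.sqrt (-F) := Real.sqrt_pos.mpr hFpos
  by_cases hE : E = 0
  · -- real root
    subst hE
    set r : ℝ := Real.sqrt (-F) / (2 * I1) with hr
    refine ⟨(r : ℂ), ?_, ?_⟩
    · have hr2 : r ^ 2 = -F / (4 * I1 ^ 2) := by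
        rw [hr, div_pow, hsqrt]; ring
      have hreal : r ^ 4 + ((0:ℝ)^2 + F)/(2*I1^2) * r ^ 2
          + ((0:ℝ)^2 - F)^2/(16*I1^4) = 0 := by
        linear_combination (r^2 + F/(4*I1^2)) * hr2
      exact_mod_cast hreal
    · simp only [Complex.ofReal_re]
      have : 0 < r := by positivity
      exact ne_of_gt this
  · -- complex root with nonzero real part
    set b : ℝ := (E ^ 2 + F) / (2 * I1 ^ 2) with hb
    set c : ℝ := (E ^ 2 - F) ^ 2 / (16 * I1 ^ 4) with hc
    set s : ℝ := E * Real.sqrt (-F) / (2 * I1 ^ 2) with hs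
    have hsne : s ≠ 0 := by
      rw [hs]
      positivity
    have hkey : c = b ^ 2 / 4 + s ^ 2 := by
      rw [hc, hb, hs]
      linear_combination (-(E^2/(4*I1^4))) * hsqrt
    set w : ℂ := (↑(-b/2) : ℂ) + (s : ℂ) * Complex.I with hw
    obtain ⟨z, hz⟩ := IsAlgClosed.exists_pow_nat_eq w (n := 2) (by norm_num)
    refine ⟨z, ?_, ?_⟩
    · have hz4 : z ^ 4 = w ^ 2 := by rw [show z^4 = (z^2)^2 by ring, hz]
      rw [hz4, show z ^ 2 = w from hz, hw]
      have hkeyC : (c : ℂ) = (b : ℂ) ^ 2 / 4 + (s : ℂ) ^ 2 := by exact_mod_cast hkey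
      push_cast
      linear_combination hkeyC + (s:ℂ)^2 * Complex.I_sq
    · intro hre
      have him : (z ^ 2).im = 0 := by
        rw [sq, Complex.mul_im, hre]; ring
      rw [hz, hw] at him
      simp at him
      exact hsne him
end

section
/- Let I₁ > 0, F = I₃²λ² − 4mglI₁ > 0. Then there exists η ∈ ℝ such that, with E = I₃λ − I₁(2η+λ), the polynomial t⁴ + ((E²+F)/(2I₁²)) t² + (E²−F)²/(16I₁⁴) has 0 as a root of multiplicity exactly 2, the other two roots being a non-zero purely imaginary conjugate pair. -/
theorem fast_superfast_at_every_stable_point (I1 I3 lam m g l F : ℝ)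
    (hI1 : 0 < I1)
    (hF : F = I3^2*lam^2 - 4*m*g*l*I1) (hFpos : 0 < F) :
    ∃ η : ℝ, ∃ b : ℝ, b ≠ 0 ∧
      (Polynomial.X^4
        + Polynomial.C (((((I3*lam - I1*(2*η + lam))^2 + F)/(2*I1^2) : ℝ)) : ℂ) * Polynomial.X^2
        + Polynomial.C (((((I3*lam - I1*(2*η + lam))^2 - F)^2/(16*I1^4) : ℝ)) : ℂ)
        : Polynomial ℂ)
      = Polynomial.X^2 * (Polynomial.X - Polynomial.C (Complex.I * b))
          * (Polynomial.X + Polynomial.C (Complex.I * b)) := by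
  have hI1' : (I1 : ℝ) ≠ 0 := ne_of_gt hI1
  refine ⟨(I3*lam - I1*lam - Real.sqrt F)/(2*I1), Real.sqrt F / I1, ?_, ?_⟩
  · exact div_ne_zero (ne_of_gt (Real.sqrt_pos.mpr hFpos)) hI1'
  · have hE : I3*lam - I1*(2*((I3*lam - I1*lam - Real.sqrt F)/(2*I1)) + lam) = Real.sqrt F := by
      field_simp
      ring
    rw [hE, Real.sq_sqrt hFpos.le]
    have h1 : ((F + F)/(2*I1^2) : ℝ) = (Real.sqrt F / I1)^2 := by
      rw [div_pow, Real.sq_sqrt hFpos.le]; ring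
    have h2 : ((F - F)^2/(16*I1^4) : ℝ) = 0 := by simp
    rw [h1, h2]
    push_cast
    have key : ∀ c : ℂ, (Polynomial.X - Polynomial.C (Complex.I * c))
        * (Polynomial.X + Polynomial.C (Complex.I * c))
        = Polynomial.X^2 + Polynomial.C (c^2) := by
      intro c
      have hc : (Complex.I * c)^2 = -(c^2) := by rw [mul_pow, Complex.I_sq]; ring
      have h3 : (Polynomial.X - Polynomial.C (Complex.I * c))
          * (Polynomial.X + Polynomial.C (Complex.I * c))
          = Polynomial.X^2 - Polynomial.C ((Complex.I * c)^2) := by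
        rw [Polynomial.C_pow]; ring
      rw [h3, hc, Polynomial.C_neg]; ring
    rw [mul_assoc, key]
    simp
    ring
end

section
/- If λ² > 4mglI₁/I₃² (with I₁, I₃ > 0, mgl > 0), then there exists η ∈ ℝ such that AC − B² > 0, where A = −mgl + (λ²I₃/(2I₁))(2I₃−I₁) − λI₃η, B = λ(2I₃−I₁)/(2I₁) − η, C = 1/I₁; conversely if λ² < 4mglI₁/I₃², then AC − B² < 0 for all η. -/
theorem fast_top_stability_condition (I1 I3 lam m g l : ℝ)
    (hI1 : 0 < I1) (hI3 : 0 < I3) (hmgl : 0 < m*g*l) :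
    (lam^2 > 4*m*g*l*I1/I3^2 →
      ∃ η : ℝ,
        (-(m*g*l) + (lam^2*I3/(2*I1))*(2*I3 - I1) - lam*I3*η) * (1/I1)
          - (lam*(2*I3 - I1)/(2*I1) - η)^2 > 0) ∧
    (lam^2 < 4*m*g*l*I1/I3^2 →
      ∀ η : ℝ,
        (-(m*g*l) + (lam^2*I3/(2*I1))*(2*I3 - I1) - lam*I3*η) * (1/I1)
          - (lam*(2*I3 - I1)/(2*I1) - η)^2 < 0) := by
  have hI3sq : (0:ℝ) < I3^2 := by positivity
  have key : ∀ η : ℝ,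
      (-(m*g*l) + (lam^2*I3/(2*I1))*(2*I3 - I1) - lam*I3*η) * (1/I1)
        - (lam*(2*I3 - I1)/(2*I1) - η)^2
      = (lam^2*I3^2 - 4*(m*g*l)*I1)/(4*I1^2)
        - (η - lam*(I3 - I1)/(2*I1))^2 := by
    intro η
    field_simp
    ring
  constructor
  · intro h
    rw [gt_iff_lt, div_lt_iff₀ hI3sq] at h
    refine ⟨lam*(I3 - I1)/(2*I1), ?_⟩
    rw [key]
    have : (0:ℝ) < (lam^2*I3^2 - 4*(m*g*l)*I1)/(4*I1^2) := by
      apply div_pos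
      · nlinarith
      · positivity
    simpa using this
  · intro h η
    rw [lt_div_iff₀ hI3sq] at h
    rw [key]
    have h1 : (lam^2*I3^2 - 4*(m*g*l)*I1)/(4*I1^2) < 0 := by
      apply div_neg_of_neg_of_pos
      · nlinarith
      · positivity
    nlinarith [sq_nonneg (η - lam*(I3 - I1)/(2*I1))]
end

section
/- If I₃ < I₁ (prolate case) and mgl > 0, the line η = λ/2 does not intersect the hyperbola (2I₃−I₁)λ² + 4(I₃−I₁)ηλ − 4I₁η² − 4mgl = 0, while for any λ with I₃²λ² > 4mglI₁ there exists η ∈ ℝ with (λ,η) on the hyperbola. -/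
theorem prolate_case_line_and_hyperbola (I1 I3 m g l : ℝ)
    (hI1 : 0 < I1) (hI3 : 0 < I3) (hlt : I3 < I1) (hmgl : 0 < m*g*l) :
    (∀ lam : ℝ,
      ¬((2*I3 - I1)*lam^2 + 4*(I3 - I1)*(lam/2)*lam - 4*I1*(lam/2)^2 - 4*(m*g*l) = 0)) ∧
    (∀ lam : ℝ, I3^2*lam^2 > 4*m*g*l*I1 →
      ∃ η : ℝ, (2*I3 - I1)*lam^2 + 4*(I3 - I1)*η*lam - 4*I1*η^2 - 4*(m*g*l) = 0) := by
  constructor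
  · intro lam h
    nlinarith [sq_nonneg lam]
  · intro lam hlam
    refine ⟨((I3 - I1)*lam + Real.sqrt (I3^2*lam^2 - 4*m*g*l*I1))/(2*I1), ?_⟩
    have hd : (0:ℝ) ≤ I3^2*lam^2 - 4*m*g*l*I1 := by linarith
    have hs := Real.sq_sqrt hd
    have h2 : (2*I1) ≠ 0 := by positivity
    field_simp
    rw [show I3 ^ 2 * lam ^ 2 - I1 * 4 * m * g * l = I3^2*lam^2 - 4*m*g*l*I1 by ring]
    nlinarith [hs]
end

section
/- Let h_{ξ}(Λ,π) = mgl e₃·Λe₃ + ½ π·(ΛIΛ⁻¹)⁻¹π − (π·e₃)ξ_L + (π·Λe₃)ξ_R with I = diag(I₁,I₁,I₃). Its derivative at (Id, λI₃e₃) in the right-trivialized direction (δθ,δπ) equals (λ − (ξ_L − ξ_R)) δπ·e₃; hence (Id, λI₃e₃) is a critical point of h_ξ if and only if ξ_L − ξ_R = λ. -/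
open Matrix

set_option maxHeartbeats 4000000

lemma hasDerivAt_horner (α β : ℝ) (R : ℝ → ℝ) (hR : Continuous R) :
    HasDerivAt (fun t : ℝ => α + t * β + t ^ 2 * R t) β 0 := by
  have h2 : HasDerivAt (fun t : ℝ => t ^ 2 * R t) 0 0 := by
    rw [hasDerivAt_iff_isLittleO]
    simp only [ne_eq, OfNat.ofNat_ne_zero, not_false_eq_true, zero_pow, zero_mul, sub_zero,
      smul_zero]
    have hb : (fun t : ℝ => t * R t) =o[nhds 0] (fun _ => (1 : ℝ)) := by
      rw [Asymptotics.isLittleO_one_iff]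
      have : ContinuousAt (fun t : ℝ => t * R t) 0 := (continuous_id.mul hR).continuousAt
      simpa using this.tendsto
    have h := (Asymptotics.isBigO_refl (fun t : ℝ => t) (nhds 0)).mul_isLittleO hb
    simp only [mul_one] at h
    have hg : (fun t : ℝ => t ^ 2 * R t) = fun t : ℝ => t * (t * R t) := by
      funext t; ring
    rw [hg]
    exact h
  have h1 : HasDerivAt (fun t : ℝ => α + t * β) β 0 := by
    simpa using (hasDerivAt_mul_const β).const_add α
  have h3 := h1.add h2
  rw [add_zero] at h3
  exact h3

theorem augmented_hamiltonian_critical_point (m g l lam ξL ξR I1 I3 : ℝ)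
    (hI1 : 0 < I1) (hI3 : 0 < I3)
    (e3 : Fin 3 → ℝ) (he3 : e3 = Pi.single 2 1)
    (Idiag : Matrix (Fin 3) (Fin 3) ℝ) (hId : Idiag = Matrix.diagonal ![I1, I1, I3])
    (hat : (Fin 3 → ℝ) → Matrix (Fin 3) (Fin 3) ℝ)
    (hhat : ∀ x, hat x = !![0, -(x 2), x 1; x 2, 0, -(x 0); -(x 1), x 0, 0])
    (h : Matrix (Fin 3) (Fin 3) ℝ × (Fin 3 → ℝ) → ℝ)
    (hh : ∀ Λ π, h (Λ, π) = m*g*l * (e3 ⬝ᵥ Λ.mulVec e3)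
        + (1/2) * (π ⬝ᵥ ((Λ * Idiag * Λ⁻¹)⁻¹).mulVec π)
        - (π ⬝ᵥ e3) * ξL + (π ⬝ᵥ Λ.mulVec e3) * ξR) :
    (∀ δθ δπ : Fin 3 → ℝ,
      HasDerivAt (fun t : ℝ => h (1 + t • hat δθ, (lam * I3) • e3 + t • δπ))
        ((lam - (ξL - ξR)) * (δπ ⬝ᵥ e3)) 0) ∧
    ((∀ δθ δπ : Fin 3 → ℝ,
      HasDerivAt (fun t : ℝ => h (1 + t • hat δθ, (lam * I3) • e3 + t • δπ)) 0 0)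
      ↔ ξL - ξR = lam) := by
  have hI1' : I1 ≠ 0 := hI1.ne'
  have hI3' : I3 ≠ 0 := hI3.ne'
  have he3' : e3 = ![0, 0, 1] := by
    rw [he3]; funext i; fin_cases i <;> simp
  have hIdinv : Idiag⁻¹ = Matrix.diagonal ![I1⁻¹, I1⁻¹, I3⁻¹] := by
    apply Matrix.inv_eq_right_inv
    rw [hId, Matrix.diagonal_mul_diagonal]
    have hv : (fun i => ![I1, I1, I3] i * ![I1⁻¹, I1⁻¹, I3⁻¹] i) = fun _ => (1:ℝ) := by
      funext i; fin_cases i <;>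
        simp [Matrix.vecHead, Matrix.vecTail, mul_inv_cancel₀ hI1', mul_inv_cancel₀ hI3']
    rw [hv]; exact Matrix.diagonal_one
  have hJ : (Matrix.diagonal ![I1⁻¹, I1⁻¹, I3⁻¹] : Matrix (Fin 3) (Fin 3) ℝ)
      = !![I1⁻¹,0,0; 0,I1⁻¹,0; 0,0,I3⁻¹] := by
    ext i j; fin_cases i <;> fin_cases j <;>
      simp [Matrix.diagonal, Matrix.vecHead, Matrix.vecTail]
  have key : ∀ (a b c p0 p1 p2 : ℝ),
      HasDerivAt (fun t : ℝ => h (1 + t • hat ![a, b, c], (lam * I3) • e3 + t • ![p0, p1, p2]))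
        ((lam - (ξL - ξR)) * p2) 0 := by
    intro a b c p0 p1 p2
    have hfeq : (fun t : ℝ => h (1 + t • hat ![a, b, c], (lam * I3) • e3 + t • ![p0, p1, p2]))
        = fun t : ℝ => m*g*l + (1/2) * (((I3⁻¹*(lam*I3)*(lam*I3)) + t*(2*p2*I3⁻¹*(lam*I3)) + t^2 * ((p2*p2*I3⁻¹ + p1*p1*I1⁻¹ + p0*p0*I1⁻¹ + c*c*I3⁻¹*(lam*I3)*(lam*I3) + 2*b*p0*I3⁻¹*(lam*I3) - 2*b*p0*I1⁻¹*(lam*I3) + b*b*I1⁻¹*(lam*I3)*(lam*I3) - 2*a*p1*I3⁻¹*(lam*I3) + 2*a*p1*I1⁻¹*(lam*I3) + a*a*I1⁻¹*(lam*I3)*(lam*I3)) + t*((2*c*c*p2*I3⁻¹*(lam*I3) + 2*b*p0*p2*I3⁻¹ - 2*b*p0*p2*I1⁻¹ + b*c*p1*I3⁻¹*(lam*I3) - b*c*p1*I1⁻¹*(lam*I3) + 2*b*b*p2*I1⁻¹*(lam*I3) - 2*a*p1*p2*I3⁻¹ + 2*a*p1*p2*I1⁻¹ + a*c*p0*I3⁻¹*(lam*I3)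 - a*c*p0*I1⁻¹*(lam*I3) + 2*a*a*p2*I1⁻¹*(lam*I3)) + t*((c*c*p2*p2*I3⁻¹ + c*c*p1*p1*I1⁻¹ + c*c*p0*p0*I1⁻¹ + b*c*p1*p2*I3⁻¹ - b*c*p1*p2*I1⁻¹ + b*c*c*p0*I3⁻¹*(lam*I3) - b*c*c*p0*I1⁻¹*(lam*I3) + b*b*p2*p2*I1⁻¹ + b*b*p1*p1*I1⁻¹ + b*b*p0*p0*I3⁻¹ + a*c*p0*p2*I3⁻¹ - a*c*p0*p2*I1⁻¹ - a*c*c*p1*I3⁻¹*(lam*I3) + a*c*c*p1*I1⁻¹*(lam*I3) - 2*a*b*p0*p1*I3⁻¹ + 2*a*b*p0*p1*I1⁻¹ + a*a*p2*p2*I1⁻¹ + a*a*p1*p1*I3⁻¹ + a*a*p0*p0*I1⁻¹) + t*(b*c*c*p0*p2*I3⁻¹ - b*c*c*p0*p2*I1⁻¹ + b*b*c*p0*p1*I3⁻¹ - b*b*c*p0*p1*I1⁻¹ - a*c*c*p1*p2*I3⁻¹ + a*c*c*p1*p2*I1⁻¹ - a*b*c*p1*p1*I3⁻¹ + a*b*c*p1*p1*I1⁻¹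 + a*b*c*p0*p0*I3⁻¹ - a*b*c*p0*p0*I1⁻¹ - a*a*c*p0*p1*I3⁻¹ + a*a*c*p0*p1*I1⁻¹))))) / (1 + t^2*(a^2+b^2+c^2)))
            - ((lam*I3) + t*p2)*ξL + ((lam*I3) + t*p2 + t^2*(p0*b - p1*a))*ξR := by
      funext t
      have hdpos : (0:ℝ) < 1 + t^2*(a^2+b^2+c^2) := by positivity
      have hLmat : (1 : Matrix (Fin 3) (Fin 3) ℝ) + t • hat ![a, b, c]
          = !![1, -(t*c), t*b; t*c, 1, -(t*a); -(t*b), t*a, 1] := by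
        rw [hhat]; ext i j; fin_cases i <;> fin_cases j <;> simp [Matrix.one_apply]
      have hdet : (!![1, -(t*c), t*b; t*c, 1, -(t*a); -(t*b), t*a, 1]
          : Matrix (Fin 3) (Fin 3) ℝ).det = 1 + t^2*(a^2+b^2+c^2) := by
        simp [Matrix.det_fin_three]; ring
      have hu : IsUnit (!![1, -(t*c), t*b; t*c, 1, -(t*a); -(t*b), t*a, 1]
          : Matrix (Fin 3) (Fin 3) ℝ).det := by
        rw [hdet]; exact (hdpos.ne').isUnit
      set L : Matrix (Fin 3) (Fin 3) ℝ := !![1, -(t*c), t*b; t*c, 1, -(t*a); -(t*b), t*a, 1]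
        with hL
      have hinv : (L * Idiag * L⁻¹)⁻¹
          = (1 + t^2*(a^2+b^2+c^2))⁻¹ • (L * !![I1⁻¹,0,0; 0,I1⁻¹,0; 0,0,I3⁻¹] * adjugate L) := by
        rw [Matrix.mul_inv_rev, Matrix.mul_inv_rev, Matrix.nonsing_inv_nonsing_inv _ hu,
          hIdinv, hJ, Matrix.inv_def, hdet, Ring.inverse_eq_inv']
        rw [Matrix.mul_smul, Matrix.mul_smul, ← mul_assoc]
      rw [hh, hLmat, hinv, he3', hL]
      simp only [Matrix.adjugate_fin_three_of, Matrix.mul_fin_three, Matrix.mulVec,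
        dotProduct, Fin.sum_univ_three, Matrix.smul_apply, Pi.add_apply, Pi.smul_apply,
        smul_eq_mul, Matrix.cons_val_zero, Matrix.cons_val_one, Matrix.head_cons,
        Matrix.cons_val_two, Matrix.tail_cons, Matrix.of_apply, Matrix.cons_val', Matrix.empty_val',
        Matrix.cons_val_fin_one, Matrix.head_fin_const]
      field_simp
      ring
    rw [hfeq]
    have hQR : Continuous (fun t : ℝ => ((p2*p2*I3⁻¹ + p1*p1*I1⁻¹ + p0*p0*I1⁻¹ + c*c*I3⁻¹*(lam*I3)*(lam*I3) + 2*b*p0*I3⁻¹*(lam*I3) - 2*b*p0*I1⁻¹*(lam*I3) + b*b*I1⁻¹*(lam*I3)*(lam*I3) - 2*a*p1*I3⁻¹*(lam*I3) + 2*a*p1*I1⁻¹*(lam*I3) + a*a*I1⁻¹*(lam*I3)*(lam*I3)) + t*((2*c*c*p2*I3⁻¹*(lam*I3) + 2*b*p0*p2*I3⁻¹ - 2*b*p0*p2*I1⁻¹ + b*c*p1*I3⁻¹*(lam*I3) - b*c*p1*I1⁻¹*(lam*I3) + 2*b*b*p2*I1⁻¹*(lam*I3) - 2*a*p1*p2*I3⁻¹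 + 2*a*p1*p2*I1⁻¹ + a*c*p0*I3⁻¹*(lam*I3) - a*c*p0*I1⁻¹*(lam*I3) + 2*a*a*p2*I1⁻¹*(lam*I3)) + t*((c*c*p2*p2*I3⁻¹ + c*c*p1*p1*I1⁻¹ + c*c*p0*p0*I1⁻¹ + b*c*p1*p2*I3⁻¹ - b*c*p1*p2*I1⁻¹ + b*c*c*p0*I3⁻¹*(lam*I3) - b*c*c*p0*I1⁻¹*(lam*I3) + b*b*p2*p2*I1⁻¹ + b*b*p1*p1*I1⁻¹ + b*b*p0*p0*I3⁻¹ + a*c*p0*p2*I3⁻¹ - a*c*p0*p2*I1⁻¹ - a*c*c*p1*I3⁻¹*(lam*I3) + a*c*c*p1*I1⁻¹*(lam*I3) - 2*a*b*p0*p1*I3⁻¹ + 2*a*b*p0*p1*I1⁻¹ + a*a*p2*p2*I1⁻¹ + a*a*p1*p1*I3⁻¹ + a*a*p0*p0*I1⁻¹) + t*(b*c*c*p0*p2*I3⁻¹ - b*c*c*p0*p2*I1⁻¹ + b*b*c*p0*p1*I3⁻¹ - b*b*c*p0*p1*I1⁻¹ - a*c*c*p1*p2*I3⁻¹ + a*c*c*p1*p2*I1⁻¹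 - a*b*c*p1*p1*I3⁻¹ + a*b*c*p1*p1*I1⁻¹ + a*b*c*p0*p0*I3⁻¹ - a*b*c*p0*p0*I1⁻¹ - a*a*c*p0*p1*I3⁻¹ + a*a*c*p0*p1*I1⁻¹))))) := by fun_prop
    have hN : HasDerivAt (fun t : ℝ => ((I3⁻¹*(lam*I3)*(lam*I3)) + t*(2*p2*I3⁻¹*(lam*I3)) + t^2 * ((p2*p2*I3⁻¹ + p1*p1*I1⁻¹ + p0*p0*I1⁻¹ + c*c*I3⁻¹*(lam*I3)*(lam*I3) + 2*b*p0*I3⁻¹*(lam*I3) - 2*b*p0*I1⁻¹*(lam*I3) + b*b*I1⁻¹*(lam*I3)*(lam*I3) - 2*a*p1*I3⁻¹*(lam*I3) + 2*a*p1*I1⁻¹*(lam*I3) + a*a*I1⁻¹*(lam*I3)*(lam*I3)) + t*((2*c*c*p2*I3⁻¹*(lam*I3) + 2*b*p0*p2*I3⁻¹ - 2*b*p0*p2*I1⁻¹ + b*c*p1*I3⁻¹*(lam*I3) - b*c*p1*I1⁻¹*(lam*I3) + 2*b*b*p2*I1⁻¹*(lam*I3) - 2*a*p1*p2*I3⁻¹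 + 2*a*p1*p2*I1⁻¹ + a*c*p0*I3⁻¹*(lam*I3) - a*c*p0*I1⁻¹*(lam*I3) + 2*a*a*p2*I1⁻¹*(lam*I3)) + t*((c*c*p2*p2*I3⁻¹ + c*c*p1*p1*I1⁻¹ + c*c*p0*p0*I1⁻¹ + b*c*p1*p2*I3⁻¹ - b*c*p1*p2*I1⁻¹ + b*c*c*p0*I3⁻¹*(lam*I3) - b*c*c*p0*I1⁻¹*(lam*I3) + b*b*p2*p2*I1⁻¹ + b*b*p1*p1*I1⁻¹ + b*b*p0*p0*I3⁻¹ + a*c*p0*p2*I3⁻¹ - a*c*p0*p2*I1⁻¹ - a*c*c*p1*I3⁻¹*(lam*I3) + a*c*c*p1*I1⁻¹*(lam*I3) - 2*a*b*p0*p1*I3⁻¹ + 2*a*b*p0*p1*I1⁻¹ + a*a*p2*p2*I1⁻¹ + a*a*p1*p1*I3⁻¹ + a*a*p0*p0*I1⁻¹) + t*(b*c*c*p0*p2*I3⁻¹ - b*c*c*p0*p2*I1⁻¹ + b*b*c*p0*p1*I3⁻¹ - b*b*c*p0*p1*I1⁻¹ - a*c*c*p1*p2*I3⁻¹ + a*c*c*p1*p2*I1⁻¹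 - a*b*c*p1*p1*I3⁻¹ + a*b*c*p1*p1*I1⁻¹ + a*b*c*p0*p0*I3⁻¹ - a*b*c*p0*p0*I1⁻¹ - a*a*c*p0*p1*I3⁻¹ + a*a*c*p0*p1*I1⁻¹)))))) (2*p2*I3⁻¹*(lam*I3)) 0 :=
      hasDerivAt_horner _ _ _ hQR
    have hD : HasDerivAt (fun t : ℝ => 1 + t^2*(a^2+b^2+c^2)) 0 0 := by
      simpa using ((hasDerivAt_pow 2 (0:ℝ)).mul_const (a^2+b^2+c^2)).const_add 1
    have hquot := hN.div hD (by norm_num)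
    have hL1 : HasDerivAt (fun t : ℝ => (lam*I3) + t*p2) p2 0 := by
      simpa using (hasDerivAt_mul_const p2).const_add (lam*I3)
    have hL2 : HasDerivAt (fun t : ℝ => (lam*I3) + t*p2 + t^2*(p0*b - p1*a)) p2 0 :=
      hasDerivAt_horner _ _ _ continuous_const
    have hE := (((hasDerivAt_const (0:ℝ) (m*g*l)).add (hquot.const_mul (1/2))).sub
      (hL1.mul_const ξL)).add (hL2.mul_const ξR)
    refine hE.congr_deriv ?_
    norm_num
    field_simp
    ring
  have main : ∀ δθ δπ : Fin 3 → ℝ,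
      HasDerivAt (fun t : ℝ => h (1 + t • hat δθ, (lam * I3) • e3 + t • δπ))
        ((lam - (ξL - ξR)) * (δπ ⬝ᵥ e3)) 0 := by
    intro δθ δπ
    have hθ : ![δθ 0, δθ 1, δθ 2] = δθ := by funext i; fin_cases i <;> rfl
    have hπ : ![δπ 0, δπ 1, δπ 2] = δπ := by funext i; fin_cases i <;> rfl
    have hdot : δπ ⬝ᵥ e3 = δπ 2 := by
      rw [he3']; simp [dotProduct, Fin.sum_univ_three]
    have h1 := key (δθ 0) (δθ 1) (δθ 2) (δπ 0) (δπ 1) (δπ 2)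
    rw [hθ, hπ] at h1
    rw [hdot]
    exact h1
  refine ⟨main, ?_, ?_⟩
  · intro H
    have hA := main 0 e3
    have hB := H 0 e3
    have he : e3 ⬝ᵥ e3 = 1 := by rw [he3']; simp [dotProduct, Fin.sum_univ_three]
    have := hA.unique hB
    rw [he, mul_one, sub_eq_zero] at this
    linarith
  · intro hx δθ δπ
    have h2 := main δθ δπ
    rw [hx, sub_self, zero_mul] at h2
    exact h2
end
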